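/- Let (X, μ) be a probability space with tree structure 𝒯, let 1 < q < p, and let φ ≥ 0 in L^p(X, μ) with ∫_X φ dμ = f, ∫_X φ^q dμ = A, ∫_X φ^p dμ = F, and suppose ∫_X (ℳ_𝒯 φ)^p dμ < ∞. Then ∫_X (ℳ_𝒯 φ)^p dμ ≤ F · (h^{−1}((p f^{p−q} A − (p−q) f^p)/F))^p, where h : [1, ∞) → (−∞, q], h(t) = p t^{p−q} − (p−q) t^p, is strictly decreasing with inverse h^{−1}. -/

import Mathlib

open MeasureTheory Set Filter

/-- A tree structure on a probability space `(X, μ)` in the sense of Definition 2.1: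
`𝒯 = ⋃ₘ 𝒯₍ₘ₎` with `𝒯₍₀₎ = {X}`, each `I ∈ 𝒯` split into at least two pairwise almost
disjoint children covering `I`, all elements measurable of positive measure, and
`sup_{I ∈ 𝒯₍ₘ₎} μ(I) → 0`. -/
structure TreeStruct {X : Type*} [MeasurableSpace X] (μ : Measure X) where
  level : ℕ → Set (Set X)
  child : Set X → Set (Set X)
  level_zero : level 0 = {Set.univ}
  level_succ : ∀ m, level (m + 1) = ⋃ I ∈ level m, child I
  mem_meas : ∀ m, ∀ I ∈ level m, MeasurableSet I
  mem_pos : ∀ m, ∀ I ∈ level m, 0 < μ I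
  child_countable : ∀ I, (child I).Countable
  child_nontrivial : ∀ m, ∀ I ∈ level m, ∃ J ∈ child I, ∃ K ∈ child I, J ≠ K
  child_subset : ∀ m, ∀ I ∈ level m, ∀ J ∈ child I, J ⊆ I
  child_almost_disjoint :
    ∀ m, ∀ I ∈ level m, ∀ J ∈ child I, ∀ K ∈ child I, J ≠ K → μ (J ∩ K) = 0
  child_cover : ∀ m, ∀ I ∈ level m, I = ⋃₀ child I
  level_small : Tendsto (fun m => ⨆ I ∈ level m, μ I) atTop (nhds 0)

/-- Membership in the tree: `I ∈ 𝒯` iff it belongs to some level. -/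
def TreeStruct.Mem {X : Type*} [MeasurableSpace X] {μ : Measure X}
    (T : TreeStruct μ) (I : Set X) : Prop := ∃ m, I ∈ T.level m

/-- The maximal operator associated to the tree `𝒯`:
`ℳ_𝒯 φ(x) = sup { (1/μ(I)) ∫_I |φ| dμ : x ∈ I ∈ 𝒯 }`. -/
noncomputable def maxOp {X : Type*} [MeasurableSpace X] {μ : Measure X}
    (T : TreeStruct μ) (φ : X → ℝ) (x : X) : ℝ :=
  sSup ((fun I => (∫ y in I, |φ y| ∂μ) / (μ I).toReal) '' {I | T.Mem I ∧ x ∈ I})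


open scoped ENNReal NNReal

section TreeAux

variable {X : Type*} [MeasurableSpace X] {μ : Measure X}

lemma TreeStruct.level_countable (T : TreeStruct μ) : ∀ m, (T.level m).Countable := by
  intro m
  induction m with
  | zero => rw [T.level_zero]; exact Set.countable_singleton _
  | succ n ih => rw [T.level_succ]; exact ih.biUnion fun I _ => T.child_countable I

lemma TreeStruct.mem_countable (T : TreeStruct μ) : {I : Set X | T.Mem I}.Countable := by
  have h : {I : Set X | T.Mem I} = ⋃ m, T.level m := by
    ext I; simp [TreeStruct.Mem, Set.mem_iUnion]
  rw [h]; exact Set.countable_iUnion T.level_countable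

lemma TreeStruct.univ_mem (T : TreeStruct μ) : T.Mem (Set.univ : Set X) :=
  ⟨0, by rw [T.level_zero]; rfl⟩

lemma TreeStruct.Mem.measurableSet {T : TreeStruct μ} {I : Set X} (h : T.Mem I) :
    MeasurableSet I := by obtain ⟨m, hm⟩ := h; exact T.mem_meas m I hm

lemma TreeStruct.Mem.pos {T : TreeStruct μ} {I : Set X} (h : T.Mem I) : 0 < μ I := by
  obtain ⟨m, hm⟩ := h; exact T.mem_pos m I hm

lemma TreeStruct.exists_parent (T : TreeStruct μ) {n : ℕ} {I : Set X}
    (h : I ∈ T.level (n + 1)) : ∃ P ∈ T.level n, I ∈ T.child P ∧ I ⊆ P := by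
  rw [T.level_succ] at h
  simp only [Set.mem_iUnion] at h
  obtain ⟨P, hP, hIP⟩ := h
  exact ⟨P, hP, hIP, T.child_subset n P hP I hIP⟩

lemma TreeStruct.same_level_ad (T : TreeStruct μ) :
    ∀ m, ∀ I ∈ T.level m, ∀ J ∈ T.level m, I ≠ J → μ (I ∩ J) = 0 := by
  intro m
  induction m with
  | zero =>
    intro I hI J hJ hIJ
    rw [T.level_zero] at hI hJ
    exact absurd ((Set.mem_singleton_iff.mp hI).trans (Set.mem_singleton_iff.mp hJ).symm) hIJ
  | succ n ih =>
    intro I hI J hJ hIJ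
    obtain ⟨P, hP, hIP, hIsub⟩ := T.exists_parent hI
    obtain ⟨Q, hQ, hJQ, hJsub⟩ := T.exists_parent hJ
    by_cases hPQ : P = Q
    · subst hPQ; exact T.child_almost_disjoint n P hP I hIP J hJQ hIJ
    · exact measure_mono_null (Set.inter_subset_inter hIsub hJsub) (ih P hP Q hQ hPQ)

lemma TreeStruct.laminar (T : TreeStruct μ) {m n : ℕ} (hmn : m ≤ n) :
    ∀ I ∈ T.level m, ∀ J ∈ T.level n, J ⊆ I ∨ μ (I ∩ J) = 0 := by
  induction n, hmn using Nat.le_induction with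
  | base =>
    intro I hI J hJ
    by_cases h : I = J
    · subst h; exact Or.inl subset_rfl
    · exact Or.inr (T.same_level_ad m I hI J hJ h)
  | succ n hmn ih =>
    intro I hI J hJ
    obtain ⟨P, hP, _, hJsub⟩ := T.exists_parent hJ
    rcases ih I hI P hP with h | h
    · exact Or.inl (hJsub.trans h)
    · exact Or.inr (measure_mono_null (Set.inter_subset_inter subset_rfl hJsub) h)

lemma TreeStruct.exists_maximal_subfamily (T : TreeStruct μ) (S : Set (Set X))
    (hS : ∀ I ∈ S, T.Mem I) :
    ∃ S' ⊆ S, ⋃₀ S = ⋃₀ S' ∧ S'.Pairwise fun K K' => μ (K ∩ K') = 0 := by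
  classical
  set Good : Set (Set X) := {K | K ∈ S ∧ ∃ m, K ∈ T.level m ∧
    ∀ k < m, ∀ K' ∈ T.level k, K' ∈ S → ¬K ⊆ K'} with hGoodDef
  refine ⟨Good, fun K hK => hK.1, ?_, ?_⟩
  · apply Set.Subset.antisymm
    · rintro x ⟨I, hIS, hxI⟩
      obtain ⟨n, hIn⟩ := hS I hIS
      have hPex : ∃ m, ∃ K ∈ T.level m, K ∈ S ∧ I ⊆ K := ⟨n, I, hIn, hIS, subset_rfl⟩
      obtain ⟨K, hKlev, hKS, hIK⟩ := Nat.find_spec hPex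
      refine ⟨K, ⟨hKS, Nat.find hPex, hKlev, ?_⟩, hIK hxI⟩
      intro k hk K' hK'lev hK'S hKK'
      exact Nat.find_min hPex hk ⟨K', hK'lev, hK'S, hIK.trans hKK'⟩
    · exact Set.sUnion_mono fun K hK => hK.1
  · intro K hK K' hK' hne
    obtain ⟨hKS, mK, hKm, hKmax⟩ := hK
    obtain ⟨hK'S, mK', hK'm, hK'max⟩ := hK'
    rcases le_total mK mK' with h | h
    · rcases T.laminar h K hKm K' hK'm with hsub | had
      · rcases eq_or_lt_of_le h with heq | hlt
        · subst heq; exact T.same_level_ad mK K hKm K' hK'm hne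
        · exact absurd hsub (hK'max mK hlt K hKm hKS)
      · exact had
    · rcases T.laminar h K' hK'm K hKm with hsub | had
      · rcases eq_or_lt_of_le h with heq | hlt
        · subst heq; exact T.same_level_ad mK' K hKm K' hK'm hne
        · exact absurd hsub (hKmax mK' hlt K' hK'm hK'S)
      · rw [Set.inter_comm]; exact had

end TreeAux

section MaxAux

variable {X : Type*} [MeasurableSpace X]

/-- The average of `|φ|` over a set `I`. -/
noncomputable def avgc (μ : Measure X) (φ : X → ℝ) (I : Set X) : ℝ :=
  (∫ y in I, |φ y| ∂μ) / (μ I).toReal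

lemma avgc_nonneg (μ : Measure X) (φ : X → ℝ) (I : Set X) : 0 ≤ avgc μ φ I :=
  div_nonneg (integral_nonneg fun y => abs_nonneg _) ENNReal.toReal_nonneg

/-- `ℝ≥0∞`-valued version of the maximal operator. -/
noncomputable def bigM {μ : Measure X} (T : TreeStruct μ) (φ : X → ℝ) (x : X) : ℝ≥0∞ :=
  ⨆ (I : Set X) (_ : T.Mem I ∧ x ∈ I), ENNReal.ofReal (avgc μ φ I)

variable {μ : Measure X} (T : TreeStruct μ) (φ : X → ℝ)

lemma le_bigM {I : Set X} {x : X} (hI : T.Mem I) (hx : x ∈ I) :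
    ENNReal.ofReal (avgc μ φ I) ≤ bigM T φ x :=
  le_iSup_of_le I (le_iSup (fun _ => ENNReal.ofReal (avgc μ φ I)) ⟨hI, hx⟩)

lemma bigM_le {x : X} {c : ℝ≥0∞} (h : ∀ I : Set X, T.Mem I → x ∈ I → ENNReal.ofReal (avgc μ φ I) ≤ c) :
    bigM T φ x ≤ c :=
  iSup₂_le fun I hI => h I hI.1 hI.2

lemma maxOp_eq_toReal_bigM (x : X) : maxOp T φ x = (bigM T φ x).toReal := by
  classical
  have hSeq : maxOp T φ x = sSup (avgc μ φ '' {I | T.Mem I ∧ x ∈ I}) := rfl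
  set S := avgc μ φ '' {I | T.Mem I ∧ x ∈ I} with hS
  have hSne : S.Nonempty := ⟨avgc μ φ Set.univ, ⟨Set.univ, ⟨T.univ_mem, Set.mem_univ x⟩, rfl⟩⟩
  have hSnn : ∀ a ∈ S, 0 ≤ a := by rintro a ⟨I, _, rfl⟩; exact avgc_nonneg μ φ I
  by_cases hbdd : BddAbove S
  · have hub : bigM T φ x ≤ ENNReal.ofReal (sSup S) := by
      refine bigM_le T φ fun I hI hx => ENNReal.ofReal_le_ofReal (le_csSup hbdd ⟨I, ⟨hI, hx⟩, rfl⟩)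
    have hne : bigM T φ x ≠ ⊤ :=
      ne_top_of_le_ne_top ENNReal.ofReal_ne_top hub
    rw [hSeq]
    apply le_antisymm
    · refine csSup_le hSne fun a ha => ?_
      obtain ⟨I, hI, rfl⟩ := ha
      have h1 : ENNReal.ofReal (avgc μ φ I) ≤ bigM T φ x := le_bigM T φ hI.1 hI.2
      have := ENNReal.toReal_mono hne h1
      rwa [ENNReal.toReal_ofReal (avgc_nonneg μ φ I)] at this
    · have h2 := ENNReal.toReal_mono ENNReal.ofReal_ne_top hub
      rwa [ENNReal.toReal_ofReal (le_csSup_of_le hbdd hSne.some_mem (hSnn _ hSne.some_mem))] at h2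
  · have htop : bigM T φ x = ⊤ := by
      by_contra h
      apply hbdd
      refine ⟨(bigM T φ x).toReal, ?_⟩
      rintro a ⟨I, hI, rfl⟩
      have h1 : ENNReal.ofReal (avgc μ φ I) ≤ bigM T φ x := le_bigM T φ hI.1 hI.2
      have := ENNReal.toReal_mono h h1
      rwa [ENNReal.toReal_ofReal (avgc_nonneg μ φ I)] at this
    rw [hSeq, Real.sSup_of_not_bddAbove hbdd, htop, ENNReal.toReal_top]

lemma maxOp_nonneg (x : X) : 0 ≤ maxOp T φ x := by
  rw [maxOp_eq_toReal_bigM]; exact ENNReal.toReal_nonneg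

lemma avgc_le_maxOp {I : Set X} {x : X} (hne : bigM T φ x ≠ ⊤) (hI : T.Mem I) (hx : x ∈ I) :
    avgc μ φ I ≤ maxOp T φ x := by
  rw [maxOp_eq_toReal_bigM]
  have := ENNReal.toReal_mono hne (le_bigM T φ hI hx)
  rwa [ENNReal.toReal_ofReal (avgc_nonneg μ φ I)] at this

lemma exists_of_lt_maxOp {t : ℝ} {x : X} (ht : 0 ≤ t) (h : t < maxOp T φ x) :
    ∃ I : Set X, T.Mem I ∧ x ∈ I ∧ t < avgc μ φ I := by
  classical
  have hSeq : maxOp T φ x = sSup (avgc μ φ '' {I | T.Mem I ∧ x ∈ I}) := rfl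
  set S := avgc μ φ '' {I | T.Mem I ∧ x ∈ I} with hS
  have hSne : S.Nonempty := ⟨avgc μ φ Set.univ, ⟨Set.univ, ⟨T.univ_mem, Set.mem_univ x⟩, rfl⟩⟩
  by_cases hbdd : BddAbove S
  · rw [hSeq] at h
    obtain ⟨a, ⟨I, hI, rfl⟩, hlt⟩ := exists_lt_of_lt_csSup hSne h
    exact ⟨I, hI.1, hI.2, hlt⟩
  · rw [hSeq, Real.sSup_of_not_bddAbove hbdd] at h
    exact absurd h (not_lt.mpr ht)

lemma measurable_bigM : Measurable (bigM T φ) := by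
  classical
  have hc : {I : Set X | T.Mem I}.Countable := T.mem_countable
  have := hc.to_subtype
  have heq : ∀ x, bigM T φ x =
      ⨆ I : {I : Set X | T.Mem I}, (I : Set X).indicator (fun _ => ENNReal.ofReal (avgc μ φ I)) x := by
    intro x
    apply le_antisymm
    · refine bigM_le T φ fun I hI hx => ?_
      refine le_iSup_of_le ⟨I, hI⟩ ?_
      rw [Set.indicator_of_mem hx]
    · refine iSup_le fun I => ?_
      by_cases hx : x ∈ (I : Set X)
      · rw [Set.indicator_of_mem hx]
        exact le_bigM T φ I.2 hx
      · rw [Set.indicator_of_notMem hx]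
        exact zero_le
    
  simp only [funext heq]
  exact Measurable.iSup fun I =>
    Measurable.indicator measurable_const (TreeStruct.Mem.measurableSet I.2)

lemma measurable_maxOp : Measurable (maxOp T φ) := by
  have : maxOp T φ = fun x => (bigM T φ x).toReal := funext (maxOp_eq_toReal_bigM T φ)
  rw [this]
  exact (measurable_bigM T φ).ennreal_toReal

end MaxAux

lemma avgc_def {X : Type*} [MeasurableSpace X] (μ : Measure X) (φ : X → ℝ) (I : Set X) :
    avgc μ φ I = (∫ y in I, |φ y| ∂μ) / (μ I).toReal := rfl

lemma lintegral_Ioo_rpow {c r : ℝ} (hc : 0 < c) (hr : 0 < r) :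
    ∫⁻ t in Ioo (0 : ℝ) c, ENNReal.ofReal (t ^ (r - 1)) = ENNReal.ofReal (c ^ r / r) := by
  rw [setLIntegral_congr Ioo_ae_eq_Ioc]
  have hint : IntegrableOn (fun t : ℝ => t ^ (r - 1)) (Ioc 0 c) volume := by
    rw [← intervalIntegrable_iff_integrableOn_Ioc_of_le hc.le]
    exact intervalIntegral.intervalIntegrable_rpow' (by linarith)
  have hnn : 0 ≤ᵐ[volume.restrict (Ioc (0:ℝ) c)] fun t : ℝ => t ^ (r - 1) := by
    filter_upwards [ae_restrict_mem measurableSet_Ioc] with t ht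
    exact Real.rpow_nonneg ht.1.le _
  rw [← ofReal_integral_eq_lintegral_ofReal hint hnn]
  congr 1
  rw [← intervalIntegral.integral_of_le hc.le, integral_rpow (Or.inl (by linarith))]
  rw [sub_add_cancel, Real.zero_rpow (by linarith : r ≠ 0)]
  ring

lemma hfun_strictAntiOn {p q : ℝ} (hq : 1 < q) (hqp : q < p) :
    StrictAntiOn (fun u : ℝ => p * u ^ (p - q) - (p - q) * u ^ p) (Ici 1) := by
  have hp1 : (1 : ℝ) < p := hq.trans hqp
  apply strictAntiOn_of_deriv_neg (convex_Ici 1)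
  · apply ContinuousOn.sub
    · exact continuousOn_const.mul (continuousOn_id.rpow_const fun x hx =>
        Or.inl (ne_of_gt (lt_of_lt_of_le zero_lt_one hx)))
    · exact continuousOn_const.mul (continuousOn_id.rpow_const fun x hx =>
        Or.inl (ne_of_gt (lt_of_lt_of_le zero_lt_one hx)))
  · intro x hx
    rw [interior_Ici] at hx
    have hx1 : (1 : ℝ) < x := hx
    have hx0 : x ≠ 0 := by positivity
    have hd : HasDerivAt (fun u : ℝ => p * u ^ (p - q) - (p - q) * u ^ p)
        (p * ((p - q) * x ^ (p - q - 1)) - (p - q) * (p * x ^ (p - 1))) x := by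
      exact ((Real.hasDerivAt_rpow_const (Or.inl hx0)).const_mul p).sub
        ((Real.hasDerivAt_rpow_const (Or.inl hx0)).const_mul (p - q))
    rw [hd.deriv]
    have hlt : x ^ (p - q - 1) < x ^ (p - 1) :=
      (Real.rpow_lt_rpow_left_iff hx1).mpr (by linarith)
    linarith [mul_lt_mul_of_pos_left hlt (mul_pos (show (0:ℝ) < p by linarith) (sub_pos.mpr hqp))]

/-- Lemma 4.2: for `1 < q < p` and `φ ≥ 0` in `L^p` with `∫φ = f`, `∫φ^q = A`,
`∫φ^p = F` and `∫ (ℳ_𝒯 φ)^p dμ` finite, one has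
`∫ (ℳ_𝒯 φ)^p dμ ≤ F (h⁻¹((p f^{p-q} A - (p-q) f^p)/F))^p`, i.e. for the unique `t ≥ 1`
with `h(t) = p t^{p-q} - (p-q) t^p = (p f^{p-q} A - (p-q) f^p)/F` one has
`∫ (ℳ_𝒯 φ)^p dμ ≤ F t^p`. -/
theorem maximal_upper_bound {X : Type*} [MeasurableSpace X]
    (μ : Measure X) [IsProbabilityMeasure μ] [NullSingletonClass μ] (T : TreeStruct μ)
    (p q f A F : ℝ) (hq : 1 < q) (hqp : q < p)
    (φ : X → ℝ) (hφ : ∀ x, 0 ≤ φ x) (hint : Integrable φ μ)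
    (hintq : Integrable (fun x => φ x ^ q) μ)
    (hintp : Integrable (fun x => φ x ^ p) μ)
    (hMp : Integrable (fun x => maxOp T φ x ^ p) μ)
    (hf : ∫ x, φ x ∂μ = f) (hA : ∫ x, φ x ^ q ∂μ = A)
    (hF : ∫ x, φ x ^ p ∂μ = F) (hf0 : 0 < f) :
    ∀ t : ℝ, 1 ≤ t →
      p * t ^ (p - q) - (p - q) * t ^ p =
        (p * f ^ (p - q) * A - (p - q) * f ^ p) / F →
      ∫ x, maxOp T φ x ^ p ∂μ ≤ F * t ^ p := by
  intro t ht1 hteq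
  classical
  have hp1 : 1 < p := hq.trans hqp
  have hp0 : 0 < p := zero_lt_one.trans hp1
  have hq0 : 0 < q := zero_lt_one.trans hq
  have hr0 : 0 < p - q := sub_pos.mpr hqp
  have hA0 : 0 ≤ A := by
    rw [← hA]; exact integral_nonneg fun x => Real.rpow_nonneg (hφ x) q
  have hF0 : 0 < F := by
    rcases (integral_nonneg (μ := μ) (f := fun x => φ x ^ p) fun x => Real.rpow_nonneg (hφ x) p).lt_or_eq with h | h
    · rwa [hF] at h
    · exfalso
      have hzero := (integral_eq_zero_iff_of_nonneg
        (fun x => Real.rpow_nonneg (hφ x) p) hintp).mp h.symm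
      have hφ0 : φ =ᵐ[μ] 0 := by
        filter_upwards [hzero] with x hx
        exact ((Real.rpow_eq_zero_iff_of_nonneg (hφ x)).mp hx).1
      have hfz : f = 0 := by rw [← hf, integral_congr_ae hφ0]; simp
      linarith
  -- measurable nonneg representative of φ
  obtain ⟨φ₀, hφ₀m, hφ₀nn, hφφ₀⟩ : ∃ φ₀ : X → ℝ, Measurable φ₀ ∧ (∀ x, 0 ≤ φ₀ x) ∧ φ =ᵐ[μ] φ₀ := by
    have ham := hint.aemeasurable
    refine ⟨fun x => max (ham.mk φ x) 0, ham.measurable_mk.max measurable_const,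
      fun x => le_max_right _ _, ?_⟩
    filter_upwards [ham.ae_eq_mk] with x hx
    rw [← hx, max_eq_left (hφ x)]
  set Φ : X → ℝ≥0∞ := fun x => ENNReal.ofReal (φ₀ x) with hΦdef
  have hΦm : Measurable Φ := hφ₀m.ennreal_ofReal
  have hΦqm : Measurable fun x => Φ x ^ q := hΦm.pow_const q
  -- lintegral identities
  have hAbar : ∫⁻ x, Φ x ^ q ∂μ = ENNReal.ofReal A := by
    have h1 : ENNReal.ofReal A = ∫⁻ x, ENNReal.ofReal (φ x ^ q) ∂μ := by
      rw [← hA]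
      exact ofReal_integral_eq_lintegral_ofReal hintq
        (ae_of_all μ fun x => Real.rpow_nonneg (hφ x) q)
    rw [h1]
    apply lintegral_congr_ae
    filter_upwards [hφφ₀] with x hx
    rw [hx, ENNReal.ofReal_rpow_of_nonneg (hφ₀nn x) hq0.le]
  have hFbar : ∫⁻ x, Φ x ^ p ∂μ = ENNReal.ofReal F := by
    have h1 : ENNReal.ofReal F = ∫⁻ x, ENNReal.ofReal (φ x ^ p) ∂μ := by
      rw [← hF]
      exact ofReal_integral_eq_lintegral_ofReal hintp
        (ae_of_all μ fun x => Real.rpow_nonneg (hφ x) p)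
    rw [h1]
    apply lintegral_congr_ae
    filter_upwards [hφφ₀] with x hx
    rw [hx, ENNReal.ofReal_rpow_of_nonneg (hφ₀nn x) hp0.le]
  have h_avg : ∀ I : Set X, ENNReal.ofReal (∫ y in I, |φ y| ∂μ) = ∫⁻ y in I, Φ y ∂μ := by
    intro I
    rw [ofReal_integral_eq_lintegral_ofReal (hint.integrableOn.abs)
      (ae_of_all _ fun y => abs_nonneg _)]
    apply lintegral_congr_ae
    filter_upwards [ae_restrict_of_ae hφφ₀] with y hy
    rw [abs_of_nonneg (hφ y), hy]
  -- per-element weak type estimate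
  have per_elem : ∀ s : ℝ, 0 < s → ∀ I : Set X, T.Mem I → s < avgc μ φ I →
      ENNReal.ofReal s ^ q * μ I ≤ ∫⁻ y in I, Φ y ^ q ∂μ := by
    intro s hs I hI hlt
    have hμI0 : μ I ≠ 0 := hI.pos.ne'
    have hμIt : μ I ≠ ⊤ := measure_ne_top μ I
    have hμItR : 0 < (μ I).toReal := ENNReal.toReal_pos hμI0 hμIt
    have step1 : ENNReal.ofReal s * μ I ≤ ∫⁻ y in I, Φ y ∂μ := by
      rw [← h_avg I]
      rw [avgc_def] at hlt
      have hlt2 : s * (μ I).toReal < ∫ y in I, |φ y| ∂μ := (lt_div_iff₀ hμItR).mp hlt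
      calc ENNReal.ofReal s * μ I = ENNReal.ofReal (s * (μ I).toReal) := by
            rw [ENNReal.ofReal_mul hs.le, ENNReal.ofReal_toReal hμIt]
        _ ≤ ENNReal.ofReal (∫ y in I, |φ y| ∂μ) := ENNReal.ofReal_le_ofReal hlt2.le
    have hconj : q.HolderConjugate (q / (q - 1)) := by
      refine Real.holderConjugate_iff.mpr ⟨hq, ?_⟩
      rw [inv_div]
      have : q ≠ 0 := hq0.ne'
      field_simp
      ring
    have holder : ∫⁻ y in I, Φ y ∂μ ≤
        (∫⁻ y in I, Φ y ^ q ∂μ) ^ (1/q) * μ I ^ (1/(q/(q-1))) := by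
      have h := ENNReal.lintegral_mul_le_Lp_mul_Lq (μ.restrict I) hconj hΦm.aemeasurable
        (aemeasurable_const : AEMeasurable (fun _ => (1 : ℝ≥0∞)) (μ.restrict I))
      simpa [Pi.mul_apply, mul_one, ENNReal.one_rpow, lintegral_one,
        Measure.restrict_apply_univ] using h
    set a := ∫⁻ y in I, Φ y ^ q ∂μ with ha
    have hq' : 1/(q/(q-1)) = (q-1)/q := one_div_div _ _
    rw [hq'] at holder
    have comb : ENNReal.ofReal s * μ I ≤ a ^ (1/q) * μ I ^ ((q-1)/q) := step1.trans holder
    have raised := ENNReal.rpow_le_rpow comb hq0.le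
    rw [ENNReal.mul_rpow_of_nonneg _ _ hq0.le, ENNReal.mul_rpow_of_nonneg _ _ hq0.le,
      ← ENNReal.rpow_mul a, ← ENNReal.rpow_mul (μ I), one_div_mul_cancel hq0.ne',
      ENNReal.rpow_one] at raised
    have hexp : (q-1)/q*q = q-1 := div_mul_cancel₀ _ hq0.ne'
    rw [hexp] at raised
    have hsplit : μ I ^ q = μ I ^ (q - 1) * μ I := by
      conv_lhs => rw [show q = (q-1)+1 by ring]
      rw [ENNReal.rpow_add _ _ hμI0 hμIt, ENNReal.rpow_one]
    rw [hsplit, show ENNReal.ofReal s ^ q * (μ I ^ (q-1) * μ I)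
      = (ENNReal.ofReal s ^ q * μ I) * μ I ^ (q-1) by ring] at raised
    have hc0 : μ I ^ (q-1) ≠ 0 := (ENNReal.rpow_pos hI.pos hμIt).ne'
    have hct : μ I ^ (q-1) ≠ ⊤ := ENNReal.rpow_ne_top_of_nonneg (by linarith) hμIt
    exact (ENNReal.mul_le_mul_iff_left hc0 hct).mp raised
  -- covering bound
  have core : ∀ s : ℝ, 0 < s →
      ENNReal.ofReal s ^ q * μ {x | ∃ I, T.Mem I ∧ x ∈ I ∧ s < avgc μ φ I} ≤
        ∫⁻ y in {x | ∃ I, T.Mem I ∧ x ∈ I ∧ s < avgc μ φ I}, Φ y ^ q ∂μ := by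
    intro s hs
    set S : Set (Set X) := {I | T.Mem I ∧ s < avgc μ φ I} with hSdef
    have hU : {x | ∃ I, T.Mem I ∧ x ∈ I ∧ s < avgc μ φ I} = ⋃₀ S := by
      ext x
      simp only [mem_setOf_eq, mem_sUnion, hSdef]
      constructor
      · rintro ⟨I, h1, h2, h3⟩; exact ⟨I, ⟨h1, h3⟩, h2⟩
      · rintro ⟨I, ⟨h1, h3⟩, h2⟩; exact ⟨I, h1, h2, h3⟩
    obtain ⟨S', hS'sub, hUeq, hpw⟩ := T.exists_maximal_subfamily S fun I hI => hI.1
    have hS'c : S'.Countable := T.mem_countable.mono fun I hI => (hS'sub hI).1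
    have := hS'c.to_subtype
    have hU2 : ⋃₀ S' = ⋃ i : S', (i : Set X) := Set.sUnion_eq_iUnion
    have hmeas : ∀ i : S', MeasurableSet (i : Set X) := fun i =>
      TreeStruct.Mem.measurableSet (hS'sub i.2).1
    have hpw2 : Pairwise (Function.onFun (AEDisjoint μ) fun i : S' => (i : Set X)) := by
      intro i j hij
      exact hpw i.2 j.2 (Subtype.coe_injective.ne hij)
    rw [hU, hUeq, hU2]
    calc ENNReal.ofReal s ^ q * μ (⋃ i : S', (i : Set X))
        ≤ ENNReal.ofReal s ^ q * ∑' i : S', μ (i : Set X) :=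
          mul_le_mul_right (measure_iUnion_le _) _
      _ = ∑' i : S', ENNReal.ofReal s ^ q * μ (i : Set X) := ENNReal.tsum_mul_left.symm
      _ ≤ ∑' i : S', ∫⁻ y in (i : Set X), Φ y ^ q ∂μ :=
          ENNReal.tsum_le_tsum fun i => per_elem s hs i (hS'sub i.2).1 (hS'sub i.2).2
      _ = ∫⁻ y in ⋃ i : S', (i : Set X), Φ y ^ q ∂μ :=
          (lintegral_iUnion₀ (fun i => (hmeas i).nullMeasurableSet) hpw2 _).symm
  -- the set where bigM is infinite is null
  set N := {x | bigM T φ x = ⊤} with hNdef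
  have hN0 : μ N = 0 := by
    have hbound : ∀ s : ℝ, 0 < s → μ N ≤ ENNReal.ofReal (s ^ (-q) * A) := by
      intro s hs
      have hsub : N ⊆ {x | ∃ I, T.Mem I ∧ x ∈ I ∧ s < avgc μ φ I} := by
        intro x hx
        rw [hNdef, mem_setOf_eq] at hx
        by_contra hcon
        simp only [mem_setOf_eq, not_exists] at hcon
        have hb : bigM T φ x ≤ ENNReal.ofReal s := by
          apply bigM_le
          intro I hI hxI
          apply ENNReal.ofReal_le_ofReal
          by_contra h2
          push_neg at h2
          exact hcon I ⟨hI, hxI, h2⟩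
        rw [hx] at hb
        exact absurd hb (by simp)
      have hcore := core s hs
      have h1 : μ N ≤ μ {x | ∃ I, T.Mem I ∧ x ∈ I ∧ s < avgc μ φ I} := measure_mono hsub
      have h2 : ENNReal.ofReal s ^ q * μ {x | ∃ I, T.Mem I ∧ x ∈ I ∧ s < avgc μ φ I} ≤
          ENNReal.ofReal A := by
        refine hcore.trans ?_
        rw [← hAbar]
        exact setLIntegral_le_lintegral _ _
      have hs0 : ENNReal.ofReal s ^ q ≠ 0 := (ENNReal.rpow_pos (by simpa using hs) ENNReal.ofReal_ne_top).ne'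
      have hst : ENNReal.ofReal s ^ q ≠ ⊤ := ENNReal.rpow_ne_top_of_nonneg hq0.le ENNReal.ofReal_ne_top
      have h3 : μ {x | ∃ I, T.Mem I ∧ x ∈ I ∧ s < avgc μ φ I} ≤
          (ENNReal.ofReal s ^ q)⁻¹ * ENNReal.ofReal A := by
        have h5 := mul_le_mul_right h2 (ENNReal.ofReal s ^ q)⁻¹
        rwa [← mul_assoc, ENNReal.inv_mul_cancel hs0 hst, one_mul] at h5
      have h4 : (ENNReal.ofReal s ^ q)⁻¹ * ENNReal.ofReal A = ENNReal.ofReal (s ^ (-q) * A) := by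
        rw [ENNReal.ofReal_rpow_of_pos hs,
          ← ENNReal.ofReal_inv_of_pos (Real.rpow_pos_of_pos hs q),
          ← ENNReal.ofReal_mul (by positivity)]
        congr 1
        rw [Real.rpow_neg hs.le]
      exact (h1.trans h3).trans_eq h4
    have htend : Tendsto (fun n : ℕ => ENNReal.ofReal (((n : ℝ) + 1) ^ (-q) * A)) atTop (nhds 0) := by
      have h1 : Tendsto (fun n : ℕ => ((n : ℝ) + 1) ^ (-q) * A) atTop (nhds (0 * A)) := by
        apply Tendsto.mul_const
        exact (tendsto_rpow_neg_atTop hq0).comp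
          (tendsto_atTop_add_const_right atTop 1 tendsto_natCast_atTop_atTop)
      rw [zero_mul] at h1
      simpa using ENNReal.tendsto_ofReal h1
    have hle : ∀ n : ℕ, μ N ≤ ENNReal.ofReal (((n : ℝ) + 1) ^ (-q) * A) := fun n =>
      hbound _ (by positivity)
    exact le_antisymm (ge_of_tendsto' htend hle) zero_le
  -- the function m = max(maxOp, f)
  set m : X → ℝ := fun x => max (maxOp T φ x) f with hmdef
  have hm_meas : Measurable m := (measurable_maxOp T φ).max measurable_const
  have hm_f : ∀ x, f ≤ m x := fun x => le_max_right _ _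
  have hm_nn : ∀ x, 0 ≤ m x := fun x => hf0.le.trans (hm_f x)
  -- weak type inequality
  set ν : Measure X := μ.withDensity fun x => Φ x ^ q with hνdef
  have hνuniv : ν univ = ENNReal.ofReal A := by
    rw [hνdef, withDensity_apply _ MeasurableSet.univ, Measure.restrict_univ, hAbar]
  have hν_apply : ∀ s : Set X, MeasurableSet s → ν s = ∫⁻ y in s, Φ y ^ q ∂μ := fun s hs => by
    rw [hνdef, withDensity_apply _ hs]
  have WT : ∀ s : ℝ, f < s →
      ENNReal.ofReal s ^ q * μ {x | s < m x} ≤ ν {x | s < m x} := by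
    intro s hfs
    have hs0 : 0 < s := hf0.trans hfs
    set E := {x | s < m x} with hEdef
    have hEmeas : MeasurableSet E := measurableSet_lt measurable_const hm_meas
    set U := {x | ∃ I, T.Mem I ∧ x ∈ I ∧ s < avgc μ φ I} with hUdef
    have hEU : E ⊆ U := by
      intro x hx
      have hx1 : s < max (maxOp T φ x) f := hx
      have hx2 : s < maxOp T φ x := by
        rcases (lt_max_iff.mp hx1) with h | h
        · exact h
        · exact absurd h (not_lt.mpr hfs.le)
      exact exists_of_lt_maxOp T φ hs0.le hx2
    have hUE : U ⊆ E ∪ N := by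
      rintro x ⟨I, hI, hxI, hlt⟩
      by_cases hN : bigM T φ x = ⊤
      · exact Or.inr hN
      · left
        have h1 : avgc μ φ I ≤ maxOp T φ x := avgc_le_maxOp T φ hN hI hxI
        exact lt_of_lt_of_le (lt_of_lt_of_le hlt h1) (le_max_left _ _)
    calc ENNReal.ofReal s ^ q * μ E ≤ ENNReal.ofReal s ^ q * μ U :=
          mul_le_mul_right (measure_mono hEU) _
      _ ≤ ∫⁻ y in U, Φ y ^ q ∂μ := core s hs0
      _ ≤ ∫⁻ y in E ∪ N, Φ y ^ q ∂μ := lintegral_mono_set hUE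
      _ ≤ ∫⁻ y in E, Φ y ^ q ∂μ + ∫⁻ y in N, Φ y ^ q ∂μ := lintegral_union_le _ _ _
      _ = ∫⁻ y in E, Φ y ^ q ∂μ := by rw [setLIntegral_measure_zero _ _ hN0, add_zero]
      _ = ν E := (hν_apply E hEmeas).symm
  -- layer cake formulas
  set J := ∫⁻ x, ENNReal.ofReal (m x ^ p) ∂μ with hJdef
  set K := ∫⁻ x, Φ x ^ q * ENNReal.ofReal (m x ^ (p - q)) ∂μ with hKdef
  have hmofp : Measurable fun x => ENNReal.ofReal (m x ^ (p - q)) :=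
    (hm_meas.pow_const _).ennreal_ofReal
  have hKν : ∫⁻ x, ENNReal.ofReal (m x ^ (p - q)) ∂ν = K := by
    rw [hνdef, lintegral_withDensity_eq_lintegral_mul μ hΦqm hmofp]
    rfl
  set Wp := ∫⁻ s in Ioi f, μ {a | s < m a} * ENNReal.ofReal (s ^ (p - 1)) with hWpdef
  set Wr := ∫⁻ s in Ioi f, ν {a | s < m a} * ENNReal.ofReal (s ^ (p - q - 1)) with hWrdef
  -- splitting the layer cake at f
  have split : ∀ (σ : Measure X) (r : ℝ), 0 < r → σ univ ≠ ⊤ →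
      ∫⁻ s in Ioi (0:ℝ), σ {a | s < m a} * ENNReal.ofReal (s ^ (r - 1)) =
        σ univ * ENNReal.ofReal (f ^ r / r) +
          ∫⁻ s in Ioi f, σ {a | s < m a} * ENNReal.ofReal (s ^ (r - 1)) := by
    intro σ r hrpos hσfin
    rw [← Ioc_union_Ioi_eq_Ioi hf0.le,
      lintegral_union measurableSet_Ioi (Ioc_disjoint_Ioi le_rfl)]
    congr 1
    calc ∫⁻ s in Ioc 0 f, σ {a | s < m a} * ENNReal.ofReal (s ^ (r - 1))
        = ∫⁻ s in Ioo 0 f, σ {a | s < m a} * ENNReal.ofReal (s ^ (r - 1)) :=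
          (setLIntegral_congr Ioo_ae_eq_Ioc).symm
      _ = ∫⁻ s in Ioo 0 f, σ univ * ENNReal.ofReal (s ^ (r - 1)) := by
          apply setLIntegral_congr_fun measurableSet_Ioo
          intro s hs
          have : {a | s < m a} = univ := eq_univ_iff_forall.mpr fun a =>
            lt_of_lt_of_le hs.2 (hm_f a)
          simp only [this]
      _ = σ univ * ∫⁻ s in Ioo 0 f, ENNReal.ofReal (s ^ (r - 1)) :=
          lintegral_const_mul' _ _ hσfin
      _ = σ univ * ENNReal.ofReal (f ^ r / r) := by rw [lintegral_Ioo_rpow hf0 hrpos]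
  have lc1 : J = ENNReal.ofReal (f ^ p) + ENNReal.ofReal p * Wp := by
    rw [hJdef, lintegral_rpow_eq_lintegral_meas_lt_mul μ (ae_of_all μ hm_nn)
      hm_meas.aemeasurable hp0, split μ p hp0 (measure_ne_top μ univ), mul_add]
    congr 1
    rw [measure_univ, one_mul, ← ENNReal.ofReal_mul hp0.le, mul_div_cancel₀ _ hp0.ne']
  have lc2 : K = ENNReal.ofReal A * ENNReal.ofReal (f ^ (p - q)) + ENNReal.ofReal (p - q) * Wr := by
    rw [← hKν, lintegral_rpow_eq_lintegral_meas_lt_mul ν (ae_of_all ν hm_nn)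
      hm_meas.aemeasurable hr0, split ν (p - q) hr0 (by rw [hνuniv]; exact ENNReal.ofReal_ne_top),
      mul_add, hνuniv]
    congr 1
    rw [← mul_assoc, mul_comm (ENNReal.ofReal (p - q)) (ENNReal.ofReal A), mul_assoc,
      ← ENNReal.ofReal_mul hr0.le]
    congr 1
    field_simp
  -- comparison of the two tails
  have hWpr : Wp ≤ Wr := by
    rw [hWpdef, hWrdef]
    apply setLIntegral_mono' measurableSet_Ioi
    intro s hs
    have hs0 : 0 < s := hf0.trans hs
    have hsplit : ENNReal.ofReal (s ^ (p - 1)) =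
        ENNReal.ofReal s ^ q * ENNReal.ofReal (s ^ (p - q - 1)) := by
      rw [ENNReal.ofReal_rpow_of_pos hs0, ← ENNReal.ofReal_mul (Real.rpow_nonneg hs0.le _),
        ← Real.rpow_add hs0]
      congr 2
      ring
    rw [hsplit, ← mul_assoc]
    exact mul_le_mul_left (by rw [mul_comm]; exact WT s hs) _
  -- the main ENNReal inequality
  have star : ENNReal.ofReal (p - q) * J + ENNReal.ofReal p * (ENNReal.ofReal A * ENNReal.ofReal (f ^ (p - q))) ≤
      ENNReal.ofReal (p - q) * ENNReal.ofReal (f ^ p) + ENNReal.ofReal p * K := by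
    rw [lc1, lc2]
    calc ENNReal.ofReal (p-q) * (ENNReal.ofReal (f^p) + ENNReal.ofReal p * Wp) +
          ENNReal.ofReal p * (ENNReal.ofReal A * ENNReal.ofReal (f^(p-q)))
        = ENNReal.ofReal (p-q) * ENNReal.ofReal (f^p) +
          (ENNReal.ofReal p * (ENNReal.ofReal A * ENNReal.ofReal (f^(p-q))) +
            ENNReal.ofReal p * (ENNReal.ofReal (p-q) * Wp)) := by ring
      _ ≤ ENNReal.ofReal (p-q) * ENNReal.ofReal (f^p) +
          (ENNReal.ofReal p * (ENNReal.ofReal A * ENNReal.ofReal (f^(p-q))) +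
            ENNReal.ofReal p * (ENNReal.ofReal (p-q) * Wr)) := by
          exact add_le_add_right (add_le_add_right (mul_le_mul_right
            (mul_le_mul_right hWpr _) _) _) _
      _ = ENNReal.ofReal (p-q) * ENNReal.ofReal (f^p) +
          ENNReal.ofReal p * (ENNReal.ofReal A * ENNReal.ofReal (f^(p-q)) +
            ENNReal.ofReal (p-q) * Wr) := by ring
  -- Hölder for the main term
  have hHolder : K ≤ ENNReal.ofReal F ^ (q/p) * J ^ ((p - q)/p) := by
    have hconj2 : (p/q).HolderConjugate (p/(p - q)) := by
      refine Real.holderConjugate_iff.mpr ⟨(one_lt_div hq0).mpr hqp, ?_⟩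
      rw [inv_div, inv_div]
      field_simp
      ring
    have h := ENNReal.lintegral_mul_le_Lp_mul_Lq μ hconj2 hΦqm.aemeasurable hmofp.aemeasurable
    have e1 : ∀ x, (Φ x ^ q) ^ (p/q) = Φ x ^ p := by
      intro x
      rw [← ENNReal.rpow_mul]
      congr 1
      field_simp
    have e2 : ∀ x, ENNReal.ofReal (m x ^ (p - q)) ^ (p/(p-q)) = ENNReal.ofReal (m x ^ p) := by
      intro x
      rw [ENNReal.ofReal_rpow_of_pos (Real.rpow_pos_of_pos (lt_of_lt_of_le hf0 (hm_f x)) _),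
        ← Real.rpow_mul (hm_nn x)]
      congr 2
      field_simp
    simp only [Pi.mul_apply] at h
    calc K ≤ (∫⁻ x, (Φ x ^ q) ^ (p/q) ∂μ) ^ (1/(p/q)) *
          (∫⁻ x, ENNReal.ofReal (m x ^ (p-q)) ^ (p/(p-q)) ∂μ) ^ (1/(p/(p-q))) := h
      _ = ENNReal.ofReal F ^ (q/p) * J ^ ((p - q)/p) := by
          simp only [e1, e2]
          rw [hFbar, ← hJdef, one_div_div, one_div_div]
  -- J is finite
  have hJtop : J ≠ ⊤ := by
    apply ne_of_lt
    have hb : ∀ x, ENNReal.ofReal (m x ^ p) ≤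
        ENNReal.ofReal (maxOp T φ x ^ p) + ENNReal.ofReal (f ^ p) := by
      intro x
      rw [← ENNReal.ofReal_add (Real.rpow_nonneg (maxOp_nonneg T φ x) _)
        (Real.rpow_nonneg hf0.le _)]
      apply ENNReal.ofReal_le_ofReal
      rcases max_cases (maxOp T φ x) f with ⟨h1, _⟩ | ⟨h1, _⟩ <;>
        rw [hmdef] <;> simp only [h1] <;>
        [linarith [Real.rpow_nonneg hf0.le p]; linarith [Real.rpow_nonneg (maxOp_nonneg T φ x) p]]
    have hfin1 : ∫⁻ x, ENNReal.ofReal (maxOp T φ x ^ p) ∂μ < ⊤ := by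
      have h2 := hMp.2
      rw [hasFiniteIntegral_iff_norm] at h2
      refine lt_of_le_of_lt ?_ h2
      apply lintegral_mono
      intro x
      exact ENNReal.ofReal_le_ofReal (le_abs_self _)
    calc J ≤ ∫⁻ x, (ENNReal.ofReal (maxOp T φ x ^ p) + ENNReal.ofReal (f ^ p)) ∂μ :=
          lintegral_mono hb
      _ = (∫⁻ x, ENNReal.ofReal (maxOp T φ x ^ p) ∂μ) + ENNReal.ofReal (f ^ p) := by
          rw [lintegral_add_right _ measurable_const, lintegral_const, measure_univ, mul_one]
      _ < ⊤ := ENNReal.add_lt_top.mpr ⟨hfin1, ENNReal.ofReal_lt_top⟩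
  -- pass to real numbers
  have hKtop : K ≠ ⊤ := by
    refine ne_top_of_le_ne_top ?_ hHolder
    exact ENNReal.mul_ne_top (ENNReal.rpow_ne_top_of_nonneg (by positivity) ENNReal.ofReal_ne_top)
      (ENNReal.rpow_ne_top_of_nonneg (by positivity) hJtop)
  set Jr := J.toReal with hJrdef
  set Kr := K.toReal with hKrdef
  have hJr0 : 0 ≤ Jr := ENNReal.toReal_nonneg
  have star_real : (p - q) * Jr + p * (A * f ^ (p - q)) ≤ (p - q) * f ^ p + p * Kr := by
    have hfin : ENNReal.ofReal (p - q) * ENNReal.ofReal (f ^ p) + ENNReal.ofReal p * K ≠ ⊤ :=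
      ENNReal.add_ne_top.mpr ⟨ENNReal.mul_ne_top ENNReal.ofReal_ne_top ENNReal.ofReal_ne_top,
        ENNReal.mul_ne_top ENNReal.ofReal_ne_top hKtop⟩
    have h := ENNReal.toReal_mono hfin star
    rw [ENNReal.toReal_add (ENNReal.mul_ne_top ENNReal.ofReal_ne_top hJtop)
        (ENNReal.mul_ne_top ENNReal.ofReal_ne_top
          (ENNReal.mul_ne_top ENNReal.ofReal_ne_top ENNReal.ofReal_ne_top)),
      ENNReal.toReal_add (ENNReal.mul_ne_top ENNReal.ofReal_ne_top ENNReal.ofReal_ne_top)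
        (ENNReal.mul_ne_top ENNReal.ofReal_ne_top hKtop),
      ENNReal.toReal_mul, ENNReal.toReal_mul, ENNReal.toReal_mul, ENNReal.toReal_mul,
      ENNReal.toReal_mul, ENNReal.toReal_ofReal hr0.le, ENNReal.toReal_ofReal hp0.le,
      ENNReal.toReal_ofReal hA0, ENNReal.toReal_ofReal (Real.rpow_nonneg hf0.le _),
      ENNReal.toReal_ofReal (Real.rpow_nonneg hf0.le _)] at h
    exact h
  have holder_real : Kr ≤ F ^ (q/p) * Jr ^ ((p - q)/p) := by
    have hfin : ENNReal.ofReal F ^ (q/p) * J ^ ((p - q)/p) ≠ ⊤ :=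
      ENNReal.mul_ne_top (ENNReal.rpow_ne_top_of_nonneg (by positivity) ENNReal.ofReal_ne_top)
        (ENNReal.rpow_ne_top_of_nonneg (by positivity) hJtop)
    have h := ENNReal.toReal_mono hfin hHolder
    rw [ENNReal.toReal_mul, ← ENNReal.toReal_rpow, ← ENNReal.toReal_rpow,
      ENNReal.toReal_ofReal hF0.le] at h
    exact h
  -- the integral is bounded by Jr
  have hIJ : ∫ x, maxOp T φ x ^ p ∂μ ≤ Jr := by
    rw [integral_eq_lintegral_of_nonneg_ae
      (ae_of_all μ fun x => Real.rpow_nonneg (maxOp_nonneg T φ x) p)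
      ((measurable_maxOp T φ).pow_const p).aestronglyMeasurable]
    apply ENNReal.toReal_mono hJtop
    apply lintegral_mono
    intro x
    exact ENNReal.ofReal_le_ofReal
      (Real.rpow_le_rpow (maxOp_nonneg T φ x) (le_max_left _ _) hp0.le)
  -- final scalar argument
  have hFsub : p * f ^ (p - q) * A - (p - q) * f ^ p = F * (p * t ^ (p - q) - (p - q) * t ^ p) := by
    rw [hteq]
    field_simp
  rcases le_or_gt Jr F with hcase | hcase
  · refine hIJ.trans (hcase.trans ?_)
    have h8 : 1 ≤ t ^ p := Real.one_le_rpow ht1 hp0.le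
    calc F = F * 1 := by ring
      _ ≤ F * t ^ p := mul_le_mul_of_nonneg_left h8 hF0.le
  · set s := (Jr / F) ^ (1/p) with hsdef
    have hJrF : 1 < Jr / F := (one_lt_div hF0).mpr hcase
    have hs1 : 1 < s :=
      (Real.one_lt_rpow_iff_of_pos (by positivity)).mpr (Or.inl ⟨hJrF, by positivity⟩)
    have hsp : Jr = F * s ^ p := by
      have h1 : s ^ p = Jr / F := by
        rw [hsdef, ← Real.rpow_mul (by positivity : (0:ℝ) ≤ Jr / F), one_div_mul_cancel hp0.ne',
          Real.rpow_one]
      rw [h1]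
      field_simp
    have hs0 : 0 ≤ s := by positivity
    have hJrp : Jr ^ ((p - q)/p) = F ^ ((p - q)/p) * s ^ (p - q) := by
      rw [hsp, Real.mul_rpow hF0.le (Real.rpow_nonneg hs0 _), ← Real.rpow_mul hs0]
      congr 2
      field_simp
    have hFF : F ^ (q/p) * F ^ ((p - q)/p) = F := by
      rw [← Real.rpow_add hF0]
      have hqe : q/p + (p - q)/p = 1 := by field_simp; ring
      rw [hqe, Real.rpow_one]
    have key : p * t ^ (p - q) - (p - q) * t ^ p ≤ p * s ^ (p - q) - (p - q) * s ^ p := by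
      have h6 : Kr ≤ F * s ^ (p - q) := by
        calc Kr ≤ F ^ (q/p) * Jr ^ ((p - q)/p) := holder_real
          _ = (F ^ (q/p) * F ^ ((p - q)/p)) * s ^ (p - q) := by rw [hJrp]; ring
          _ = F * s ^ (p - q) := by rw [hFF]
      have h7 : (p - q) * (F * s ^ p) + p * (A * f ^ (p - q)) ≤
          (p - q) * f ^ p + p * (F * s ^ (p - q)) := by
        rw [← hsp]
        calc (p - q) * Jr + p * (A * f ^ (p - q)) ≤ (p - q) * f ^ p + p * Kr := star_real
          _ ≤ (p - q) * f ^ p + p * (F * s ^ (p - q)) := by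
              linarith [mul_le_mul_of_nonneg_left h6 hp0.le]
      have h9 : F * (p * t ^ (p - q) - (p - q) * t ^ p) ≤
          F * (p * s ^ (p - q) - (p - q) * s ^ p) := by linarith [h7, hFsub]
      exact le_of_mul_le_mul_left h9 hF0
    have hst : s ≤ t := by
      by_contra hc
      push_neg at hc
      have hmono := hfun_strictAntiOn hq hqp (mem_Ici.mpr ht1) (mem_Ici.mpr (ht1.trans hc.le)) hc
      simp only at hmono
      linarith
    calc ∫ x, maxOp T φ x ^ p ∂μ ≤ Jr := hIJ
      _ = F * s ^ p := hsp
      _ ≤ F * t ^ p := by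
        exact mul_le_mul_of_nonneg_left (Real.rpow_le_rpow hs0 hst hp0.le) hF0.le
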